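/- Let R be a p-torsion free perfectoid ring with p-power compatible roots ϖ_n of p as above. If x ∈ R satisfies x^{p^n} ∈ p^{p^n} R for some n ≥ 1, then x ∈ p R. -/

import Mathlib

/-- The defining conditions on `ϖ` for a `p`-torsion free perfectoid ring. -/
def PerfectoidCond (p : ℕ) (R : Type*) [CommRing R] (ϖ : R) : Prop :=
  Ideal.span {ϖ ^ p} = Ideal.span {(p : R)} ∧
  (∀ y : R, ∃ x : R, y - x ^ p ∈ Ideal.span {(p : R)}) ∧
  (∀ x : R, x ^ p ∈ Ideal.span {(p : R)} → x ∈ Ideal.span {ϖ})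

/-- in a p-torsion free perfectoid ring, if x^{p^n} ∈ p^{p^n}·R for
some n ≥ 1, then x ∈ p·R. -/
theorem stmt_11 {p : ℕ} (hp : p.Prime) (R : Type*) [CommRing R]
    (hnzd : (p : R) ∈ nonZeroDivisors R)
    (hc : IsAdicComplete (Ideal.span {(p : R)}) R)
    (ϖ : R) (hϖ : PerfectoidCond p R ϖ) :
    ∀ x : R, ∀ n : ℕ, 1 ≤ n → x ^ p ^ n ∈ Ideal.span {(p : R) ^ p ^ n} →
      x ∈ Ideal.span {(p : R)} := by
  obtain ⟨h1, _, h3⟩ := hϖ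
  have hd1 : (p : R) ∣ ϖ ^ p :=
    Ideal.mem_span_singleton.mp (h1 ▸ Ideal.mem_span_singleton_self (ϖ ^ p))
  have hd2 : ϖ ^ p ∣ (p : R) :=
    Ideal.mem_span_singleton.mp (h1.symm ▸ Ideal.mem_span_singleton_self ((p : R)))
  have hp1 : 1 ≤ p := hp.one_lt.le.trans' (by norm_num)
  -- ϖ is a nonzerodivisor
  have hϖnzd : ϖ ∈ nonZeroDivisors R := by
    rw [mem_nonZeroDivisors_iff_right]
    intro a ha
    obtain ⟨c, hc'⟩ := hd2
    have hpa : a * (p : R) = 0 := by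
      rw [hc']
      have hϖp : ϖ ^ p = ϖ * ϖ ^ (p - 1) := by
        rw [← pow_succ']
        congr 1
        omega
      calc a * (ϖ ^ p * c) = (a * ϖ) * (ϖ ^ (p - 1) * c) := by rw [hϖp]; ring
        _ = 0 := by rw [ha, zero_mul]
    exact mem_nonZeroDivisors_iff_right.mp hnzd a hpa
  -- key lemma: ϖ^(p*m) ∣ y^p → ϖ^m ∣ y
  have key : ∀ m : ℕ, ∀ y : R, ϖ ^ (p * m) ∣ y ^ p → ϖ ^ m ∣ y := by
    intro m
    induction m with
    | zero => intro y _; simpa using one_dvd y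
    | succ k ih =>
      intro y hy
      have hyp : y ^ p ∈ Ideal.span {(p : R)} := by
        rw [Ideal.mem_span_singleton]
        exact hd1.trans ((pow_dvd_pow ϖ (by nlinarith)).trans hy)
      obtain ⟨w, hw⟩ := Ideal.mem_span_singleton.mp (h3 y hyp)
      obtain ⟨t, ht⟩ := hy
      have hcancel : w ^ p = ϖ ^ (p * k) * t := by
        have h0 : ϖ ^ p * (w ^ p) = ϖ ^ p * (ϖ ^ (p * k) * t) := by
          have : (ϖ * w) ^ p = ϖ ^ (p * (k + 1)) * t := by rw [← hw]; exact ht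
          rw [mul_pow] at this
          rw [this, ← mul_assoc, ← pow_add]
          ring_nf
        exact (mul_cancel_left_mem_nonZeroDivisors (pow_mem hϖnzd p)).mp h0
      have hwk : ϖ ^ k ∣ w := ih w ⟨t, hcancel⟩
      rw [hw, pow_succ']
      exact mul_dvd_mul_left ϖ hwk
  -- iterate: ϖ^(p^(k+1)) ∣ x^(p^k) → ϖ^p ∣ x
  have key2 : ∀ k : ℕ, ∀ x : R, ϖ ^ p ^ (k + 1) ∣ x ^ p ^ k → ϖ ^ p ∣ x := by
    intro k
    induction k with
    | zero => intro x hx; simpa using hx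
    | succ k ih =>
      intro x hx
      apply ih
      apply key (p ^ (k + 1)) (x ^ p ^ k)
      rw [← pow_mul, show p * p ^ (k + 1) = p ^ (k + 1 + 1) from (pow_succ' p (k + 1)).symm,
        show p ^ k * p = p ^ (k + 1) from (pow_succ p k).symm]
      exact hx
  intro x n _ hx
  rw [Ideal.mem_span_singleton] at hx ⊢
  have : ϖ ^ p ^ (n + 1) ∣ x ^ p ^ n := by
    have : (ϖ ^ p) ^ p ^ n ∣ ((p : R)) ^ p ^ n := pow_dvd_pow_of_dvd hd2 _
    rw [← pow_mul, ← pow_succ'] at this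
    exact this.trans hx
  exact hd1.trans (key2 n x this)
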